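/- arXiv:2510.00323 — 2 statements merged into one kernel-verified Lean document; each statement's English description precedes it below -/
import Mathlib

section
/- Dilworth's theorem: in every finite partially ordered set (P, ≤), the maximum cardinality of an antichain is equal to the smallest number n such that P can be written as a union of n chains. -/
section DilworthAux

variable {P : Type*} [PartialOrder P]

private lemma finset_maximal {S : Finset P} (h : S.Nonempty) :
    ∃ m ∈ S, ∀ x ∈ S, m ≤ x → m = x := by
  obtain ⟨m, hm, hmax⟩ := Set.Finite.exists_maximalFor id (S : Set P) S.finite_toSet
    (Finset.coe_nonempty.2 h)
  exact ⟨m, hm, fun x hx hle => le_antisymm hle (hmax hx hle)⟩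

private lemma chain_greatest {B : Finset P}
    (hB : IsChain (· ≤ ·) (B : Set P)) (hne : B.Nonempty) :
    ∃ a ∈ B, ∀ x ∈ B, x ≤ a := by
  obtain ⟨a, ha, hmax⟩ := finset_maximal hne
  refine ⟨a, ha, fun x hx => ?_⟩
  rcases eq_or_ne x a with rfl | hxa
  · exact le_rfl
  · rcases hB hx ha hxa with h | h
    · exact h
    · exact le_of_eq (hmax x hx h).symm

private lemma antichain_le_cover {A : Finset P}
    (hanti : IsAntichain (· ≤ ·) (A : Set P)) {n : ℕ} {C : Fin n → Set P}
    (hchain : ∀ i, IsChain (· ≤ ·) (C i))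
    (hcov : ∀ x ∈ A, ∃ i, x ∈ C i) : A.card ≤ n := by
  have hf : ∀ a : ↥A, ∃ i, (a : P) ∈ C i := fun a => hcov a a.2
  choose f hfmem using hf
  have hinj : Function.Injective f := by
    intro a b hab
    by_contra hne
    have hne' : (a : P) ≠ (b : P) := fun h => hne (Subtype.ext h)
    rcases (hchain (f a)) (hfmem a) (hab.symm ▸ hfmem b) hne' with h | h
    · exact hanti a.2 b.2 hne' h
    · exact hanti b.2 a.2 hne'.symm h
  calc A.card = Fintype.card ↥A := (Fintype.card_coe A).symm
    _ ≤ Fintype.card (Fin n) := Fintype.card_le_of_injective f hinj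
    _ = n := Fintype.card_fin n

private lemma antichain_meets_chains {A : Finset P}
    (hanti : IsAntichain (· ≤ ·) (A : Set P)) {n : ℕ} {C : Fin n → Finset P}
    (hchain : ∀ i, IsChain (· ≤ ·) ((C i : Set P)))
    (hcov : ∀ x ∈ A, ∃ i, x ∈ C i) (hcard : A.card = n) :
    ∀ i, ∃ x ∈ A, x ∈ C i := by
  have hf : ∀ a : ↥A, ∃ i, (a : P) ∈ C i := fun a => hcov a a.2
  choose f hfmem using hf
  have hinj : Function.Injective f := by
    intro a b hab
    by_contra hne
    have hne' : (a : P) ≠ (b : P) := fun h => hne (Subtype.ext h)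
    rcases (hchain (f a)) (hfmem a) (hab.symm ▸ hfmem b) hne' with h | h
    · exact hanti a.2 b.2 hne' h
    · exact hanti b.2 a.2 hne'.symm h
  have hbij : Function.Bijective f :=
    (Fintype.bijective_iff_injective_and_card f).2
      ⟨hinj, by simp [Fintype.card_coe, hcard]⟩
  intro i
  obtain ⟨a, ha⟩ := hbij.2 i
  exact ⟨a, a.2, ha ▸ hfmem a⟩

private lemma dilworth_key : ∀ (n : ℕ) (S : Finset P), S.card ≤ n →
    ∃ (k : ℕ) (C : Fin k → Finset P) (A : Finset P),
      (∀ i, IsChain (· ≤ ·) (C i : Set P)) ∧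
      (∀ i, (C i).Nonempty) ∧
      (∀ i, C i ⊆ S) ∧
      (∀ x ∈ S, ∃ i, x ∈ C i) ∧
      (∀ i j, i ≠ j → Disjoint (C i) (C j)) ∧
      A ⊆ S ∧ IsAntichain (· ≤ ·) (A : Set P) ∧ A.card = k := by
  classical
  intro n
  induction n with
  | zero =>
    intro S hS
    have hSe : S = ∅ := Finset.card_eq_zero.1 (Nat.le_zero.1 hS)
    subst hSe
    exact ⟨0, Fin.elim0, ∅, fun i => i.elim0, fun i => i.elim0, fun i => i.elim0,
      fun x hx => absurd hx (Finset.notMem_empty x),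
      fun i => i.elim0, Finset.Subset.refl _,
      by rw [Finset.coe_empty]; exact Set.pairwise_empty _, rfl⟩
  | succ n ih =>
    intro S hS
    rcases eq_or_ne S ∅ with hSe | hSe
    · subst hSe
      exact ⟨0, Fin.elim0, ∅, fun i => i.elim0, fun i => i.elim0, fun i => i.elim0,
        fun x hx => absurd hx (Finset.notMem_empty x),
        fun i => i.elim0, Finset.Subset.refl _,
        by rw [Finset.coe_empty]; exact Set.pairwise_empty _, rfl⟩
    obtain ⟨m, hmS, hmmax⟩ := finset_maximal (Finset.nonempty_iff_ne_empty.2 hSe)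
    set S' := S.erase m with hS'def
    have hS'card : S'.card ≤ n := by
      have h1 : S'.card = S.card - 1 := Finset.card_erase_of_mem hmS
      have h2 : 1 ≤ S.card := Finset.card_pos.2 (Finset.nonempty_iff_ne_empty.2 hSe)
      omega
    have hS'S : S' ⊆ S := Finset.erase_subset m S
    have hmS' : m ∉ S' := Finset.notMem_erase m S
    obtain ⟨k, C, A, hCchain, hCne, hCsub, hCcov, hCdisj, hAsub, hAanti, hAcard⟩ :=
      ih S' hS'card
    -- B i : elements of C i lying in some antichain of size k inside S'
    set B : Fin k → Finset P := fun i => (C i).filter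
      (fun x => ∃ A' : Finset P, A' ⊆ S' ∧ IsAntichain (· ≤ ·) (A' : Set P) ∧
        A'.card = k ∧ x ∈ A') with hBdef
    have hBsub : ∀ i, B i ⊆ C i := fun i => Finset.filter_subset _ _
    have hBchain : ∀ i, IsChain (· ≤ ·) (B i : Set P) :=
      fun i => (hCchain i).mono (Finset.coe_subset.2 (hBsub i))
    have hBne : ∀ i, (B i).Nonempty := by
      intro i
      obtain ⟨x, hxA, hxC⟩ := antichain_meets_chains hAanti hCchain
        (fun x hx => hCcov x (hAsub hx)) hAcard i
      exact ⟨x, Finset.mem_filter.2 ⟨hxC, A, hAsub, hAanti, hAcard, hxA⟩⟩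
    have hgreat := fun i => chain_greatest (hBchain i) (hBne i)
    choose a haB hamax using hgreat
    have haC : ∀ i, a i ∈ C i := fun i => hBsub i (haB i)
    have haS' : ∀ i, a i ∈ S' := fun i => hCsub i (haC i)
    -- the a i form an antichain
    have haanti : ∀ i j, i ≠ j → ¬ a i ≤ a j := by
      intro i j hij hle
      obtain ⟨Aj, hAjsub, hAjanti, hAjcard, hajA⟩ := (Finset.mem_filter.1 (haB j)).2
      obtain ⟨y, hyA, hyC⟩ := antichain_meets_chains hAjanti hCchain
        (fun x hx => hCcov x (hAjsub hx)) hAjcard i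
      have hyB : y ∈ B i := Finset.mem_filter.2 ⟨hyC, Aj, hAjsub, hAjanti, hAjcard, hyA⟩
      have hyle : y ≤ a j := le_trans (hamax i y hyB) hle
      have hyaj : y = a j := by
        by_contra hne
        exact hAjanti hyA hajA hne hyle
      have haji : a j ∈ C i := hyaj ▸ hyC
      exact Finset.disjoint_left.1 (hCdisj i j hij) haji (haC j)
    have hainj : Function.Injective a := by
      intro i j hij
      by_contra hne
      exact Finset.disjoint_left.1 (hCdisj i j hne) (haC i) (hij ▸ haC j)
    by_cases hcase : ∃ i, a i ≤ m
    · -- Case A: shrink with chain K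
      obtain ⟨i₀, hi₀⟩ := hcase
      set K : Finset P := insert m ((C i₀).filter (fun x => x ≤ a i₀)) with hKdef
      have hmemK : ∀ x ∈ K, x = m ∨ (x ∈ C i₀ ∧ x ≤ a i₀) := by
        intro x hx
        rcases Finset.mem_insert.1 hx with h | h
        · exact Or.inl h
        · exact Or.inr (Finset.mem_filter.1 h)
      have hKle : ∀ x ∈ K, x ≤ m := by
        intro x hx
        rcases hmemK x hx with rfl | ⟨_, hxa⟩
        · exact le_rfl
        · exact le_trans hxa hi₀
      have hKchain : IsChain (· ≤ ·) (K : Set P) := by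
        intro x hx y hy hxy
        rcases hmemK x hx with rfl | ⟨hxC, hxa⟩
        · exact Or.inr (hKle y hy)
        · rcases hmemK y hy with rfl | ⟨hyC, hya⟩
          · exact Or.inl (hKle x hx)
          · exact hCchain i₀ hxC hyC hxy
      have hKsub : K ⊆ S := by
        intro x hx
        rcases hmemK x hx with rfl | ⟨hxC, _⟩
        · exact hmS
        · exact hS'S (hCsub i₀ hxC)
      have hmK : m ∈ K := Finset.mem_insert_self _ _
      set S'' : Finset P := S \ K with hS''def
      have hS''S' : S'' ⊆ S' := by
        intro x hx
        obtain ⟨hxS, hxK⟩ := Finset.mem_sdiff.1 hx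
        exact Finset.mem_erase.2 ⟨fun h => hxK (h ▸ hmK), hxS⟩
      obtain ⟨k'', D, A'', hDchain, hDne, hDsub, hDcov, hDdisj, hA''sub, hA''anti, hA''card⟩ :=
        ih S'' (le_trans (Finset.card_le_card hS''S') hS'card)
      -- no antichain of size k fits in S''
      have hk'' : k'' < k := by
        by_contra h
        push_neg at h
        obtain ⟨A₀, hA₀sub, hA₀card⟩ :=
          Finset.exists_subset_card_eq (show k ≤ A''.card from hA''card ▸ h)
        have hA₀anti : IsAntichain (· ≤ ·) (A₀ : Set P) :=
          hA''anti.subset (Finset.coe_subset.2 hA₀sub)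
        have hA₀S'' : A₀ ⊆ S'' := hA₀sub.trans hA''sub
        obtain ⟨y, hyA₀, hyC⟩ := antichain_meets_chains hA₀anti hCchain
          (fun x hx => hCcov x (hS''S' (hA₀S'' hx))) hA₀card i₀
        have hyB : y ∈ B i₀ := Finset.mem_filter.2
          ⟨hyC, A₀, hA₀S''.trans hS''S', hA₀anti, hA₀card, hyA₀⟩
        have hyK : y ∈ K := Finset.mem_insert.2 (Or.inr
          (Finset.mem_filter.2 ⟨hyC, hamax i₀ y hyB⟩))
        exact (Finset.mem_sdiff.1 (hA₀S'' hyA₀)).2 hyK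
      -- cover of S by K together with D
      set E : Fin (k'' + 1) → Finset P := Fin.cons K D with hEdef
      have hEchain : ∀ i, IsChain (· ≤ ·) (E i : Set P) := by
        intro i
        rcases Fin.eq_zero_or_eq_succ i with rfl | ⟨j, rfl⟩
        · simpa [hEdef] using hKchain
        · simpa [hEdef] using hDchain j
      have hEne : ∀ i, (E i).Nonempty := by
        intro i
        rcases Fin.eq_zero_or_eq_succ i with rfl | ⟨j, rfl⟩
        · exact ⟨m, by simpa [hEdef] using hmK⟩
        · simpa [hEdef] using hDne j
      have hEsub : ∀ i, E i ⊆ S := by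
        intro i
        rcases Fin.eq_zero_or_eq_succ i with rfl | ⟨j, rfl⟩
        · simpa [hEdef] using hKsub
        · simpa [hEdef] using (hDsub j).trans (Finset.sdiff_subset)
      have hEcov : ∀ x ∈ S, ∃ i, x ∈ E i := by
        intro x hx
        by_cases hxK : x ∈ K
        · exact ⟨0, by simpa [hEdef] using hxK⟩
        · obtain ⟨j, hj⟩ := hDcov x (Finset.mem_sdiff.2 ⟨hx, hxK⟩)
          exact ⟨j.succ, by simpa [hEdef] using hj⟩
      have hEdisj : ∀ i j, i ≠ j → Disjoint (E i) (E j) := by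
        have hKD : ∀ j, Disjoint K (D j) := by
          intro j
          rw [Finset.disjoint_left]
          intro x hxK hxD
          exact (Finset.mem_sdiff.1 (hDsub j hxD)).2 hxK
        intro i j hij
        rcases Fin.eq_zero_or_eq_succ i with rfl | ⟨i', rfl⟩ <;>
          rcases Fin.eq_zero_or_eq_succ j with rfl | ⟨j', rfl⟩
        · exact absurd rfl hij
        · simpa [hEdef] using hKD j'
        · simpa [hEdef] using (hKD i').symm
        · have hne : i' ≠ j' := fun h => hij (by rw [h])
          simpa [hEdef] using hDdisj i' j' hne
      have hkeq : k = k'' + 1 := by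
        refine le_antisymm ?_ hk''
        have := antichain_le_cover (C := fun i => ((E i : Finset P) : Set P)) hAanti
          (fun i => hEchain i)
          (fun x hx => by
            obtain ⟨i, hi⟩ := hEcov x (hS'S (hAsub hx))
            exact ⟨i, hi⟩)
        omega
      exact ⟨k'' + 1, E, A, hEchain, hEne, hEsub, hEcov, hEdisj,
        hAsub.trans hS'S, hAanti, hkeq ▸ hAcard⟩
    · -- Case B: the a i together with m form an antichain of size k + 1
      push_neg at hcase
      set E : Fin (k + 1) → Finset P := Fin.cons {m} C with hEdef
      have hEchain : ∀ i, IsChain (· ≤ ·) (E i : Set P) := by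
        intro i
        rcases Fin.eq_zero_or_eq_succ i with rfl | ⟨j, rfl⟩
        · simp [hEdef]
        · simpa [hEdef] using hCchain j
      have hEne : ∀ i, (E i).Nonempty := by
        intro i
        rcases Fin.eq_zero_or_eq_succ i with rfl | ⟨j, rfl⟩
        · exact ⟨m, by simp [hEdef]⟩
        · simpa [hEdef] using hCne j
      have hEsub : ∀ i, E i ⊆ S := by
        intro i
        rcases Fin.eq_zero_or_eq_succ i with rfl | ⟨j, rfl⟩
        · simpa [hEdef] using Finset.singleton_subset_iff.2 hmS
        · simpa [hEdef] using (hCsub j).trans hS'S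
      have hEcov : ∀ x ∈ S, ∃ i, x ∈ E i := by
        intro x hx
        rcases eq_or_ne x m with rfl | hxm
        · exact ⟨0, by simp [hEdef]⟩
        · obtain ⟨j, hj⟩ := hCcov x (Finset.mem_erase.2 ⟨hxm, hx⟩)
          exact ⟨j.succ, by simpa [hEdef] using hj⟩
      have hEdisj : ∀ i j, i ≠ j → Disjoint (E i) (E j) := by
        have hmC : ∀ j, Disjoint ({m} : Finset P) (C j) := by
          intro j
          rw [Finset.disjoint_left]
          intro x hx hxC
          rw [Finset.mem_singleton] at hx
          exact hmS' (hx ▸ hCsub j hxC)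
        intro i j hij
        rcases Fin.eq_zero_or_eq_succ i with rfl | ⟨i', rfl⟩ <;>
          rcases Fin.eq_zero_or_eq_succ j with rfl | ⟨j', rfl⟩
        · exact absurd rfl hij
        · simpa [hEdef] using hmC j'
        · simpa [hEdef] using (hmC i').symm
        · have hne : i' ≠ j' := fun h => hij (by rw [h])
          simpa [hEdef] using hCdisj i' j' hne
      set Astar : Finset P := Finset.univ.image a with hAstardef
      have hmAstar : m ∉ Astar := by
        intro hm
        obtain ⟨i, _, hi⟩ := Finset.mem_image.1 hm
        exact hmS' (hi ▸ haS' i)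
      have hAstarS' : ∀ x ∈ Astar, x ∈ S' := by
        intro x hx
        obtain ⟨i, _, hi⟩ := Finset.mem_image.1 hx
        exact hi ▸ haS' i
      have hAnew_sub : insert m Astar ⊆ S := by
        intro x hx
        rcases Finset.mem_insert.1 hx with rfl | hx
        · exact hmS
        · exact hS'S (hAstarS' x hx)
      have hnotle : ∀ i, ¬ m ≤ a i := by
        intro i hle
        exact hmS' ((hmmax (a i) (hS'S (haS' i)) hle) ▸ haS' i)
      have hAnew_anti : IsAntichain (· ≤ ·) ((insert m Astar : Finset P) : Set P) := by
        intro x hx y hy hxy hle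
        rw [Finset.coe_insert, Set.mem_insert_iff] at hx hy
        rcases hx with rfl | hx
        · rcases hy with rfl | hy
          · exact hxy rfl
          · obtain ⟨i, _, hi⟩ := Finset.mem_image.1 hy
            exact hnotle i (hi ▸ hle)
        · obtain ⟨i, _, hi⟩ := Finset.mem_image.1 hx
          rcases hy with rfl | hy
          · exact hcase i (hi ▸ hle)
          · obtain ⟨j, _, hj⟩ := Finset.mem_image.1 hy
            have hij : i ≠ j := by
              intro h
              exact hxy (by rw [← hi, ← hj, h])
            exact haanti i j hij (by rw [hi, hj]; exact hle)
      have hAnew_card : (insert m Astar).card = k + 1 := by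
        rw [Finset.card_insert_of_notMem hmAstar,
          Finset.card_image_of_injective _ hainj, Finset.card_univ, Fintype.card_fin]
      exact ⟨k + 1, E, insert m Astar, hEchain, hEne, hEsub, hEcov, hEdisj,
        hAnew_sub, hAnew_anti, hAnew_card⟩

end DilworthAux

/-- **Dilworth's theorem.** In every finite partially ordered set `P`, the maximum
cardinality of an antichain is equal to the smallest number `n` such that `P` can
be written as a union of `n` chains. -/
theorem dilworth (P : Type*) [Fintype P] [PartialOrder P] :
    sSup {a : ℕ | ∃ A : Finset P, IsAntichain (· ≤ ·) (A : Set P) ∧ A.card = a} =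
      sInf {n : ℕ | ∃ C : Fin n → Set P,
        (∀ i, IsChain (· ≤ ·) (C i)) ∧ (⋃ i, C i) = Set.univ} := by
  classical
  set Sa := {a : ℕ | ∃ A : Finset P, IsAntichain (· ≤ ·) (A : Set P) ∧ A.card = a} with hSadef
  set T := {n : ℕ | ∃ C : Fin n → Set P,
    (∀ i, IsChain (· ≤ ·) (C i)) ∧ (⋃ i, C i) = Set.univ} with hTdef
  have hSa0 : (0 : ℕ) ∈ Sa :=
    ⟨∅, by rw [Finset.coe_empty]; exact Set.pairwise_empty _, rfl⟩
  have hbdd : BddAbove Sa := by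
    refine ⟨Fintype.card P, ?_⟩
    rintro a ⟨A, _, rfl⟩
    simpa using Finset.card_le_univ A
  have hTne : T.Nonempty := by
    refine ⟨Fintype.card P, fun i => {(Fintype.equivFin P).symm i}, fun i => ?_, ?_⟩
    · exact Set.Subsingleton.isChain Set.subsingleton_singleton
    · refine Set.eq_univ_of_forall fun x => Set.mem_iUnion.2 ⟨Fintype.equivFin P x, ?_⟩
      simp
  refine le_antisymm ?_ ?_
  · refine le_csInf hTne ?_
    rintro n ⟨C, hchain, hunion⟩
    refine csSup_le ⟨0, hSa0⟩ ?_
    rintro b ⟨A, hanti, rfl⟩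
    refine antichain_le_cover hanti hchain fun x _ => ?_
    have : x ∈ ⋃ i, C i := hunion ▸ Set.mem_univ x
    exact Set.mem_iUnion.1 this
  · obtain ⟨k, C, A, hchain, _, _, hcov, _, _, hanti, hcard⟩ :=
      dilworth_key (Fintype.card P) Finset.univ (le_of_eq Finset.card_univ)
    have hkT : k ∈ T := by
      refine ⟨fun i => ((C i : Finset P) : Set P), fun i => hchain i, ?_⟩
      refine Set.eq_univ_of_forall fun x => ?_
      obtain ⟨i, hi⟩ := hcov x (Finset.mem_univ x)
      exact Set.mem_iUnion.2 ⟨i, hi⟩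
    have hkS : k ∈ Sa := ⟨A, hanti, hcard⟩
    exact le_trans (csInf_le (OrderBot.bddBelow T) hkT) (le_csSup hbdd hkS)
end

section
/- Exponential lower bound on Ramsey numbers for pairs: for every k ≥ 3 there exists a symmetric 2-colouring of the unordered pairs from a set with 2^⌊k/2⌋ elements such that no subset with k elements is homogeneous for the colouring. -/
open Finset

private lemma pow_lt_factorial' : ∀ k, 3 ≤ k → 2 ^ (k / 2 + 1) < k.factorial := by
  intro k
  induction k with
  | zero => omega
  | succ n ih =>
    intro h
    rcases Nat.lt_or_ge n 3 with h3 | h3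
    · interval_cases n <;> simp [Nat.factorial] at *
    · have hn := ih h3
      have h1 : (n + 1) / 2 + 1 ≤ n / 2 + 2 := by omega
      calc 2 ^ ((n+1)/2 + 1) ≤ 2 ^ (n/2 + 2) := Nat.pow_le_pow_right (by norm_num) h1
        _ = 2 * 2 ^ (n/2 + 1) := by ring
        _ < 2 * n.factorial := by omega
        _ ≤ (n+1) * n.factorial := by
            apply Nat.mul_le_mul_right; omega
        _ = (n+1).factorial := rfl

private lemma key_ineq (k : ℕ) (hk : 3 ≤ k) :
    (2 ^ (k / 2)).choose k * 2 < 2 ^ k.choose 2 := by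
  set m := k / 2 with hm
  set N := 2 ^ m with hN
  -- k.choose 2 + m ≥ m * k
  have hK : m * k ≤ k.choose 2 + m := by
    rw [Nat.choose_two_right]
    rcases Nat.even_or_odd k with ⟨j, hj⟩ | ⟨j, hj⟩
    · have hmj : m = j := by omega
      have : k * (k - 1) / 2 = j * (k - 1) := by
        subst hj
        rw [show j + j = 2 * j by ring, Nat.mul_assoc, Nat.mul_div_cancel_left _ (by norm_num)]
      rw [this, hmj]
      have h1 : 1 ≤ k - 1 := by omega
      nlinarith [Nat.sub_add_cancel (show 1 ≤ k by omega)]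
    · have hmj : m = j := by omega
      have : k * (k - 1) / 2 = k * j := by
        subst hj
        rw [show 2 * j + 1 - 1 = 2 * j by omega, show (2*j+1) * (2*j) = 2 * ((2*j+1)*j) by ring,
          Nat.mul_div_cancel_left _ (by norm_num)]
      rw [this, hmj]
      nlinarith
  have hfac : 2 ^ (m + 1) < k.factorial := pow_lt_factorial' k hk
  -- k! * (choose * 2) ≤ 2 * N^k
  have h1 : k.factorial * (N.choose k * 2) ≤ 2 * N ^ k := by
    have := Nat.descFactorial_le_pow N k
    rw [Nat.descFactorial_eq_factorial_mul_choose] at this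
    nlinarith
  have h2 : 2 * N ^ k = 2 ^ (m * k + 1) := by
    rw [hN, ← Nat.pow_mul]; ring
  have h3 : (2:ℕ) ^ (m * k + 1) < k.factorial * 2 ^ k.choose 2 := by
    calc (2:ℕ) ^ (m * k + 1) ≤ 2 ^ (k.choose 2 + m + 1) :=
          Nat.pow_le_pow_right (by norm_num) (by omega)
      _ = 2 ^ (m + 1) * 2 ^ k.choose 2 := by rw [← Nat.pow_add]; ring_nf
      _ < k.factorial * 2 ^ k.choose 2 := by
          apply Nat.mul_lt_mul_right (Nat.pow_pos (by norm_num)) |>.mpr hfac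
  have := lt_of_le_of_lt (h1.trans_eq h2) h3
  exact Nat.lt_of_mul_lt_mul_left this


private def pairSet {α : Type*} [DecidableEq α] (H : Finset α) : Finset (Sym2 α) :=
  H.offDiag.image Sym2.mk.uncurry

private lemma pairSet_card_ge {α : Type*} [DecidableEq α] (H : Finset α) :
    H.card.choose 2 ≤ (pairSet H).card := by
  classical
  have hcard : Fintype.card {e : Sym2 {x // x ∈ H} // ¬ e.IsDiag} = H.card.choose 2 := by
    rw [Sym2.card_subtype_not_diag, Fintype.card_coe]
  rw [← hcard, ← Finset.card_univ]
  apply Finset.card_le_card_of_injOn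
    (fun e => Sym2.map (Subtype.val) (e : {e : Sym2 {x // x ∈ H} // ¬ e.IsDiag}).1)
  · rintro ⟨e, he⟩ -
    induction e with
    | _ a b =>
      simp only [Sym2.map_pair_eq, pairSet, Finset.coe_image, Set.mem_image, Finset.mem_coe]
      refine ⟨(a.1, b.1), Finset.mem_offDiag.2 ⟨a.2, b.2, ?_⟩, rfl⟩
      intro hab
      exact he (by simp [Sym2.mk_isDiag_iff, Subtype.ext hab])
  · intro e _ e' _ h
    exact Subtype.ext (Sym2.map.injective Subtype.val_injective h)

private lemma mono_card_le {α : Type*} [Fintype α] [DecidableEq α] (H : Finset α) (c : Fin 2) :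
    ((Finset.univ : Finset (Sym2 α → Fin 2)).filter
      (fun f => ∀ e ∈ pairSet H, f e = c)).card
      ≤ 2 ^ (Fintype.card (Sym2 α) - (pairSet H).card) := by
  classical
  have htarget : Fintype.card (({x // x ∈ (pairSet H)ᶜ}) → Fin 2)
      = 2 ^ (Fintype.card (Sym2 α) - (pairSet H).card) := by
    rw [Fintype.card_fun, Fintype.card_coe, Finset.card_compl, Fintype.card_fin]
  rw [← htarget, ← Finset.card_univ]
  apply Finset.card_le_card_of_injOn (fun f => fun a : {x // x ∈ (pairSet H)ᶜ} => f a.1)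
  · intro _ _; exact Finset.mem_univ _
  · intro f hf g hg h
    simp only [Finset.mem_coe, Finset.mem_filter] at hf hg
    funext e
    by_cases he : e ∈ pairSet H
    · rw [hf.2 e he, hg.2 e he]
    · exact congrFun h ⟨e, Finset.mem_compl.2 he⟩


private lemma exists_good (α : Type*) [Fintype α] [DecidableEq α] (k : ℕ)
    (hkN : k ≤ Fintype.card α)
    (hcond : (Fintype.card α).choose k * 2 < 2 ^ k.choose 2) :
    ∃ f : Sym2 α → Fin 2, ∀ H : Finset α, H.card = k →
      ¬ ∃ c : Fin 2, ∀ e ∈ pairSet H, f e = c := by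
  classical
  set T := Fintype.card (Sym2 α) with hT
  set K := k.choose 2 with hK
  set Bad : Finset (Sym2 α → Fin 2) := Finset.univ.filter
    (fun f => ∃ H : Finset α, H.card = k ∧ ∃ c : Fin 2, ∀ e ∈ pairSet H, f e = c) with hBad
  have hsub : Bad ⊆ (Finset.powersetCard k (Finset.univ : Finset α) ×ˢ
      (Finset.univ : Finset (Fin 2))).biUnion
        (fun p => Finset.univ.filter (fun f => ∀ e ∈ pairSet p.1, f e = p.2)) := by
    intro f hf
    simp only [hBad, Finset.mem_filter, Finset.mem_univ, true_and] at hf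
    obtain ⟨H, hH, c, hc⟩ := hf
    apply Finset.mem_biUnion.2
    exact ⟨(H, c), Finset.mem_product.2 ⟨Finset.mem_powersetCard.2 ⟨Finset.subset_univ _, hH⟩,
      Finset.mem_univ _⟩, Finset.mem_filter.2 ⟨Finset.mem_univ _, hc⟩⟩
  have hcount : Bad.card ≤ (Fintype.card α).choose k * 2 * 2 ^ (T - K) := by
    have h1 := Finset.card_le_card hsub
    have h2 := Finset.card_biUnion_le (s := Finset.powersetCard k (Finset.univ : Finset α) ×ˢ
      (Finset.univ : Finset (Fin 2)))
      (t := fun p => Finset.univ.filter (fun f : Sym2 α → Fin 2 => ∀ e ∈ pairSet p.1, f e = p.2))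
    have h3 : ∑ p ∈ (Finset.powersetCard k (Finset.univ : Finset α) ×ˢ
        (Finset.univ : Finset (Fin 2))),
        (Finset.univ.filter (fun f : Sym2 α → Fin 2 => ∀ e ∈ pairSet p.1, f e = p.2)).card
        ≤ ∑ _p ∈ (Finset.powersetCard k (Finset.univ : Finset α) ×ˢ
        (Finset.univ : Finset (Fin 2))), 2 ^ (T - K) := by
      apply Finset.sum_le_sum
      rintro ⟨H, c⟩ hp
      have hH : H.card = k :=
        (Finset.mem_powersetCard.1 (Finset.mem_product.1 hp).1).2
      refine (mono_card_le H c).trans (Nat.pow_le_pow_right (by norm_num)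
        (Nat.sub_le_sub_left ?_ T))
      rw [hK, ← hH]
      exact pairSet_card_ge H
    have h4 : ∑ _p ∈ (Finset.powersetCard k (Finset.univ : Finset α) ×ˢ
        (Finset.univ : Finset (Fin 2))), 2 ^ (T - K)
        = (Fintype.card α).choose k * 2 * 2 ^ (T - K) := by
      rw [Finset.sum_const, Finset.card_product, Finset.card_powersetCard,
        Finset.card_univ, Finset.card_univ, Fintype.card_fin, smul_eq_mul]
    exact h1.trans (h2.trans (h3.trans h4.le))
  have hKT : K ≤ T := by
    obtain ⟨H0, -, hH0⟩ := Finset.exists_subset_card_eq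
      (show k ≤ (Finset.univ : Finset α).card by rw [Finset.card_univ]; exact hkN)
    have h1 : K ≤ (pairSet H0).card := by rw [hK, ← hH0]; exact pairSet_card_ge H0
    exact h1.trans ((pairSet H0).card_le_univ.trans_eq Finset.card_univ)
  have hlt : Bad.card < Fintype.card (Sym2 α → Fin 2) := by
    rw [Fintype.card_fun, Fintype.card_fin]
    calc Bad.card ≤ (Fintype.card α).choose k * 2 * 2 ^ (T - K) := hcount
      _ < 2 ^ K * 2 ^ (T - K) :=
          (Nat.mul_lt_mul_right (Nat.pow_pos (by norm_num))).mpr hcond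
      _ = 2 ^ T := by rw [← Nat.pow_add, Nat.add_sub_cancel' hKT]
  obtain ⟨f, hf⟩ : ∃ f : Sym2 α → Fin 2, f ∉ Bad := by
    by_contra h
    push_neg at h
    have hle := Finset.card_le_card
      (fun f _ => h f : (Finset.univ : Finset (Sym2 α → Fin 2)) ⊆ Bad)
    rw [Finset.card_univ] at hle
    omega
  refine ⟨f, fun H hH ⟨c, hc⟩ => hf ?_⟩
  simp only [hBad, Finset.mem_filter, Finset.mem_univ, true_and]
  exact ⟨H, hH, c, hc⟩

/-- Exponential lower bound on Ramsey numbers for pairs: for every `k ≥ 3` there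
exists a symmetric 2-colouring of the unordered pairs from a set with `2^⌊k/2⌋`
elements such that no subset with `k` elements is homogeneous for the colouring. -/
theorem ramsey_lower_bound (k : ℕ) (hk : 3 ≤ k) :
    ∃ χ : Fin (2 ^ (k / 2)) → Fin (2 ^ (k / 2)) → Fin 2,
      (∀ x y, χ x y = χ y x) ∧
      ∀ H : Finset (Fin (2 ^ (k / 2))), H.card = k →
        ¬ ∃ c : Fin 2, ∀ x ∈ H, ∀ y ∈ H, x ≠ y → χ x y = c := by
  classical
  by_cases hkN : k ≤ 2 ^ (k / 2)
  case neg =>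
    refine ⟨fun _ _ => 0, fun _ _ => rfl, fun H hH _ => ?_⟩
    have h1 := H.card_le_univ
    rw [hH, Fintype.card_fin] at h1
    omega
  obtain ⟨f, hf⟩ := exists_good (Fin (2 ^ (k / 2))) k
    (by rw [Fintype.card_fin]; exact hkN)
    (by rw [Fintype.card_fin]; exact key_ineq k hk)
  refine ⟨fun x y => f s(x, y), fun x y => by simp only []; rw [Sym2.eq_swap], ?_⟩
  intro H hH ⟨c, hc⟩
  apply hf H hH
  refine ⟨c, fun e he => ?_⟩
  simp only [pairSet, Finset.mem_image] at he
  obtain ⟨⟨x, y⟩, hxy, rfl⟩ := he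
  obtain ⟨hx, hy, hne⟩ := Finset.mem_offDiag.1 hxy
  exact hc x hx y hy hne
end
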